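/- Let F : ℝ → ℝ be differentiable and let C > 0 satisfy F(s) ≥ −C s² for all s ∈ ℝ. Then for every C' > 2C and every M > 0 there exist r⁺ ≥ M and r⁻ ≤ −M such that r⁺·F'(r⁺) ≥ −C'·(r⁺)² and r⁻·F'(r⁻) ≥ −C'·(r⁻)². In particular there exist sequences r_k⁺ → +∞ and r_k⁻ → −∞ with r_k^±·F'(r_k^±) ≥ −C'·(r_k^±)² for all k. -/

import Mathlib

open Filter

/-- existence of good truncation levels. If `F` is differentiable and
`F s ≥ -C s²` for all `s`, then for every `C' > 2C` and every `M > 0` there exist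
`r⁺ ≥ M` and `r⁻ ≤ -M` with `r^± · F'(r^±) ≥ -C' (r^±)²`; in particular there are
sequences `r_k⁺ → +∞` and `r_k⁻ → -∞` with `r_k^± · F'(r_k^±) ≥ -C' (r_k^±)²`. -/
theorem statement17 (F : ℝ → ℝ) (hF : Differentiable ℝ F) (C : ℝ) (hC : 0 < C)
    (hlow : ∀ s : ℝ, F s ≥ -C * s ^ 2) :
    ∀ C' : ℝ, 2 * C < C' →
      ((∀ M : ℝ, 0 < M →
          (∃ rp : ℝ, M ≤ rp ∧ rp * deriv F rp ≥ -C' * rp ^ 2) ∧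
            ∃ rm : ℝ, rm ≤ -M ∧ rm * deriv F rm ≥ -C' * rm ^ 2) ∧
        (∃ rp : ℕ → ℝ, Tendsto rp atTop atTop ∧
            ∀ k, rp k * deriv F (rp k) ≥ -C' * (rp k) ^ 2) ∧
          ∃ rm : ℕ → ℝ, Tendsto rm atTop atBot ∧
            ∀ k, rm k * deriv F (rm k) ≥ -C' * (rm k) ^ 2) := by
  intro C' hC'
  set G : ℝ → ℝ := fun s => F s + C' / 2 * s ^ 2 with hGdef
  have hGder : ∀ s : ℝ, HasDerivAt G (deriv F s + C' * s) s := by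
    intro s
    have h1 := (hF s).hasDerivAt
    have h2 : HasDerivAt (fun x : ℝ => C' / 2 * x ^ 2) (C' * s) s := by
      have := (hasDerivAt_pow 2 s).const_mul (C' / 2)
      convert this using 1
      exacts [rfl, rfl, by norm_num; ring]
    exact h1.add h2
  have hGdiff : Differentiable ℝ G := fun s => (hGder s).differentiableAt
  have hε : 0 < C' / 2 - C := by linarith
  set ε := C' / 2 - C with hεdef
  have hGlow : ∀ s : ℝ, G s ≥ ε * s ^ 2 := by
    intro s
    have := hlow s
    simp only [hGdef, hεdef]
    nlinarith [this]
  -- positive side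
  have pos : ∀ M : ℝ, 0 < M → ∃ rp : ℝ, M ≤ rp ∧ rp * deriv F rp ≥ -C' * rp ^ 2 := by
    intro M hM
    by_contra h
    push_neg at h
    have hanti : StrictAntiOn G (Set.Ici M) := by
      apply strictAntiOn_of_deriv_neg (convex_Ici M) hGdiff.continuous.continuousOn
      intro r hr
      rw [interior_Ici] at hr
      have hrM : M < r := hr
      have hr0 : 0 < r := hM.trans hrM
      have := h r hrM.le
      rw [(hGder r).deriv]
      nlinarith [this]
    set s : ℝ := max (M + 1) (max 1 ((|G M| + 1) / ε)) with hs
    have hs1 : (1 : ℝ) ≤ s := le_trans (le_max_left _ _) (le_max_right _ _)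
    have hs2 : (|G M| + 1) / ε ≤ s := le_trans (le_max_right _ _) (le_max_right _ _)
    have hsM : M < s := lt_of_lt_of_le (by linarith) (le_max_left _ _)
    have hGs : G s < G M := hanti Set.self_mem_Ici (Set.mem_Ici.2 hsM.le) hsM
    have hGs2 : G s ≥ ε * s ^ 2 := hGlow s
    have h3 : |G M| + 1 ≤ ε * s := by
      rw [div_le_iff₀ hε] at hs2
      linarith [hs2]
    have h4 : ε * s ≤ ε * s ^ 2 := by
      nlinarith [mul_nonneg (mul_nonneg hε.le (by linarith : (0:ℝ) ≤ s)) (by linarith : (0:ℝ) ≤ s - 1)]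
    have h5 : G M ≤ |G M| := le_abs_self _
    linarith
  -- negative side
  have neg : ∀ M : ℝ, 0 < M → ∃ rm : ℝ, rm ≤ -M ∧ rm * deriv F rm ≥ -C' * rm ^ 2 := by
    intro M hM
    by_contra h
    push_neg at h
    have hmono : StrictMonoOn G (Set.Iic (-M)) := by
      apply strictMonoOn_of_deriv_pos (convex_Iic (-M)) hGdiff.continuous.continuousOn
      intro r hr
      rw [interior_Iic] at hr
      have hrM : r < -M := hr
      have hr0 : r < 0 := hrM.trans (by linarith)
      have := h r hrM.le
      rw [(hGder r).deriv]
      nlinarith [this]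
    set t : ℝ := max (M + 1) (max 1 ((|G (-M)| + 1) / ε)) with ht
    set s : ℝ := -t with hs
    have hns : -s = t := by simp [hs]
    have hs1 : (1 : ℝ) ≤ -s := by rw [hns]; exact le_trans (le_max_left _ _) (le_max_right _ _)
    have hs2 : (|G (-M)| + 1) / ε ≤ -s := by rw [hns]; exact le_trans (le_max_right _ _) (le_max_right _ _)
    have hsM : s < -M := by
      have : M + 1 ≤ t := le_max_left _ _
      simp only [hs]; linarith
    have hGs : G s < G (-M) := hmono (Set.mem_Iic.2 hsM.le) Set.self_mem_Iic hsM
    have hGs2 : G s ≥ ε * s ^ 2 := hGlow s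
    have h3 : |G (-M)| + 1 ≤ ε * (-s) := by
      rw [div_le_iff₀ hε] at hs2
      linarith [hs2]
    have h4 : ε * (-s) ≤ ε * s ^ 2 := by
      nlinarith [mul_nonneg (mul_nonneg hε.le (by linarith : (0:ℝ) ≤ -s)) (by linarith : (0:ℝ) ≤ -s - 1)]
    have h5 : G (-M) ≤ |G (-M)| := le_abs_self _
    linarith
  refine ⟨fun M hM => ⟨pos M hM, neg M hM⟩, ?_, ?_⟩
  · choose rp h1 h2 using fun k : ℕ => pos ((k : ℝ) + 1) (by positivity)
    refine ⟨rp, ?_, h2⟩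
    exact tendsto_atTop_mono h1
      (tendsto_atTop_add_const_right atTop 1 tendsto_natCast_atTop_atTop)
  · choose rm h1 h2 using fun k : ℕ => neg ((k : ℝ) + 1) (by positivity)
    refine ⟨rm, ?_, h2⟩
    have : Tendsto (fun k : ℕ => -((k : ℝ) + 1)) atTop atBot := by
      apply tendsto_neg_atBot_iff.mpr
      exact tendsto_atTop_add_const_right atTop 1 tendsto_natCast_atTop_atTop
    exact tendsto_atBot_mono (fun k => (h1 k)) this
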